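/- Let I ⊆ ℝ be a nondegenerate interval and let (D_n)_{n=0}^∞ be a sequence of closed subsets of I such that D₀ = I and D_{n+1} ⊆ int(D_n) (interior relative to I) for all n ≥ 0. Then ⋂_{n=0}^∞ D_n ∈ Ω(I); that is, there exists a sequence of continuous functions d₁ ≤ d₂ ≤ ⋯ on I with I_d = ⋂_{n=0}^∞ D_n. -/

import Mathlib

open Set Filter Topology

/-- `limSet I f` is the set `I_f = {x ∈ I : lim_{n→∞} f_n(x) = +∞}`. -/
def limSet (I : Set ℝ) (f : ℕ → ℝ → ℝ) : Set ℝ :=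
  {x ∈ I | Tendsto (fun n => f n x) atTop atTop}

/-- Let `(D_n)` be a sequence of relatively closed subsets of an interval `I` with `D₀ = I`
and `D_{n+1} ⊆ int_I (D_n)` (interior relative to `I`).  Then `⋂ n, D_n ∈ Ω(I)`, i.e.
it equals `I_d` for some nondecreasing sequence of continuous functions on `I`. -/
theorem stmt_5 (I : Set ℝ) (hI : I.OrdConnected) (hInt : I.Nontrivial)
    (D : ℕ → Set ℝ) (hDI : ∀ n, D n ⊆ I)
    (hclosed : ∀ n, IsClosed ((Subtype.val ⁻¹' D n : Set I)))
    (hD0 : D 0 = I)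
    (hnested : ∀ n, (Subtype.val ⁻¹' D (n + 1) : Set I) ⊆
      interior (Subtype.val ⁻¹' D n : Set I)) :
    ∃ d : ℕ → ℝ → ℝ, (∀ n, ContinuousOn (d n) I) ∧
      (∀ n, ∀ x ∈ I, d n x ≤ d (n + 1) x) ∧ limSet I d = ⋂ n, D n := by
  classical
  -- D is antitone
  have hmono : ∀ k, D (k + 1) ⊆ D k := by
    intro k x hx
    have hxI : x ∈ I := hDI _ hx
    have hmem : (⟨x, hxI⟩ : I) ∈ interior (Subtype.val ⁻¹' D k : Set I) := hnested k hx
    exact Set.mem_preimage.mp (interior_subset hmem)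
  have hanti : Antitone D := antitone_nat_of_succ_le hmono
  -- Urysohn functions
  have key : ∀ k, ∃ f : C(I, ℝ),
      EqOn f 0 ((interior (Subtype.val ⁻¹' D k : Set I))ᶜ) ∧
      EqOn f 1 (Subtype.val ⁻¹' D (k + 1)) ∧ ∀ x, f x ∈ Icc (0 : ℝ) 1 := fun k =>
    exists_continuous_zero_one_of_isClosed isOpen_interior.isClosed_compl
      (hclosed (k + 1)) (Disjoint.mono_right (hnested k) disjoint_compl_left)
  choose F hF0 hF1 hF01 using key
  set g : ℕ → ℝ → ℝ := fun k x => if h : x ∈ I then F k ⟨x, h⟩ else 0 with hg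
  have hg_nonneg : ∀ k x, 0 ≤ g k x := by
    intro k x
    simp only [hg]
    split
    · exact (hF01 k _).1
    · exact le_refl 0
  refine ⟨fun n x => ∑ k ∈ Finset.range n, g k x, ?_, ?_, ?_⟩
  · intro n
    rw [continuousOn_iff_continuous_restrict]
    have : I.restrict (fun x => ∑ k ∈ Finset.range n, g k x) =
        fun y => ∑ k ∈ Finset.range n, F k y := by
      funext y
      simp [hg, restrict, y.2]
    change Continuous (I.restrict (fun x => ∑ k ∈ Finset.range n, g k x))
    rw [this]
    exact continuous_finset_sum _ fun k _ => (F k).continuous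
  · intro n x hx
    simp only [Finset.sum_range_succ]
    exact le_add_of_nonneg_right (hg_nonneg n x)
  · ext x
    simp only [limSet, mem_setOf_eq, mem_iInter]
    constructor
    · rintro ⟨hxI, htend⟩ m
      by_contra hxm
      -- g k x = 0 for k ≥ m
      have hzero : ∀ k, m ≤ k → g k x = 0 := by
        intro k hk
        have hxk : x ∉ D k := fun h => hxm (hanti hk h)
        have hnotin : (⟨x, hxI⟩ : I) ∉ interior (Subtype.val ⁻¹' D k : Set I) := by
          intro h
          exact hxk (Set.mem_preimage.mp (interior_subset h))
        simp only [hg, dif_pos hxI]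
        exact hF0 k hnotin
      have hle1 : ∀ k, g k x ≤ 1 := by
        intro k
        simp only [hg, dif_pos hxI]
        exact (hF01 k _).2
      have hbound : ∀ n, ∑ k ∈ Finset.range n, g k x ≤ (m : ℝ) := by
        intro n
        rcases le_or_gt n m with h | h
        · calc ∑ k ∈ Finset.range n, g k x ≤ ∑ k ∈ Finset.range n, (1 : ℝ) :=
                Finset.sum_le_sum fun k _ => hle1 k
            _ = n := by simp
            _ ≤ m := Nat.cast_le.mpr h
        · have : ∑ k ∈ Finset.range n, g k x = ∑ k ∈ Finset.range m, g k x := by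
            symm
            apply Finset.sum_subset (Finset.range_subset_range.mpr h.le)
            intro k _ hk
            exact hzero k (Nat.le_of_not_lt (by simpa using hk))
          rw [this]
          calc ∑ k ∈ Finset.range m, g k x ≤ ∑ k ∈ Finset.range m, (1 : ℝ) :=
                Finset.sum_le_sum fun k _ => hle1 k
            _ = m := by simp
      obtain ⟨n, hn⟩ := (htend.eventually_ge_atTop ((m : ℝ) + 1)).exists
      linarith [hbound n]
    · intro hx
      have hxI : x ∈ I := hD0 ▸ hx 0
      refine ⟨hxI, ?_⟩
      have hone : ∀ k, g k x = 1 := by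
        intro k
        simp only [hg, dif_pos hxI]
        exact hF1 k (show (⟨x, hxI⟩ : I) ∈ _ from hx (k + 1))
      have : (fun n => ∑ k ∈ Finset.range n, g k x) = fun n : ℕ => (n : ℝ) := by
        funext n
        simp [hone]
      rw [this]
      exact tendsto_natCast_atTop_atTop
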